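/- In the free invariant algebra Â = T(V)/I generated by X, the set Ŝ consisting of 1̂, q̂, the monomials x̂_{j₁}···x̂_{jₘ} (m ≥ 1), and the monomials x̂_{j₁}···x̂_{jₜ}·q̂·x̂_{j_{t+1}}···x̂_{jₘ} (m ≥ 1, 0 ≤ t ≤ m) forms a k-basis of Â as a vector space. -/

import Mathlib

noncomputable section

variable (k : Type) [Field k] (J : Type)

/-- The generator `q̃` of the tensor algebra `T(V)`, `V = (⊕_j k·xⱼ) ⊕ k·q̃`. -/
def qTilde : TensorAlgebra k (Option J →₀ k) :=
  TensorAlgebra.ι k (Finsupp.single none 1)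

/-- The generators `xⱼ` of the tensor algebra. -/
def xTilde (j : J) : TensorAlgebra k (Option J →₀ k) :=
  TensorAlgebra.ι k (Finsupp.single (some j) 1)

/-- The relations generating the ideal `I`: `q̃⊗q̃ - q̃` and `q̃⊗a⊗q̃ - q̃⊗a`. -/
inductive FreeInvRel : TensorAlgebra k (Option J →₀ k) → TensorAlgebra k (Option J →₀ k) → Prop
  | idem : FreeInvRel (qTilde k J * qTilde k J) (qTilde k J)
  | inv (a : TensorAlgebra k (Option J →₀ k)) :
      FreeInvRel (qTilde k J * a * qTilde k J) (qTilde k J * a)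

/-- A monomial index: either a word `x̂_{j₁}···x̂_{jₘ}` (the empty word giving `1̂`), or a
pair of words with one `q̂` inserted in between, `x̂_{j₁}···x̂_{jₜ}·q̂·x̂_{j_{t+1}}···x̂_{jₘ}`
(the empty pair giving `q̂`). -/
def monoVal : List J ⊕ (List J × List J) → RingQuot (FreeInvRel k J)
  | .inl w => (w.map fun j => RingQuot.mkAlgHom k (FreeInvRel k J) (xTilde k J j)).prod
  | .inr (w₁, w₂) =>
      (w₁.map fun j => RingQuot.mkAlgHom k (FreeInvRel k J) (xTilde k J j)).prod
        * RingQuot.mkAlgHom k (FreeInvRel k J) (qTilde k J)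
        * (w₂.map fun j => RingQuot.mkAlgHom k (FreeInvRel k J) (xTilde k J j)).prod

/-! ### Auxiliary: the monoid of monomials -/

abbrev FIM (J : Type) : Type := List J ⊕ (List J × List J)

def fmul : FIM J → FIM J → FIM J
  | .inl w, .inl w' => .inl (w ++ w')
  | .inl w, .inr (a, b) => .inr (w ++ a, b)
  | .inr (a, b), .inl w => .inr (a, b ++ w)
  | .inr (a, b), .inr (c, d) => .inr (a, b ++ c ++ d)

instance : Monoid (FIM J) where
  mul := fmul J
  one := .inl []
  mul_assoc x y z := by
    rcases x with w | ⟨a, b⟩ <;> rcases y with w' | ⟨c, d⟩ <;> rcases z with w'' | ⟨e, f⟩ <;>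
      simp [HMul.hMul, Mul.mul, fmul, List.append_assoc]
  one_mul x := by rcases x with w | ⟨a, b⟩ <;> simp [HMul.hMul, Mul.mul, fmul, One.one]
  mul_one x := by rcases x with w | ⟨a, b⟩ <;> simp [HMul.hMul, Mul.mul, fmul, One.one]

@[simp] lemma FIM.inl_mul_inl (w w' : List J) :
    (Sum.inl w : FIM J) * (Sum.inl w' : FIM J) = Sum.inl (w ++ w') := rfl
@[simp] lemma FIM.inl_mul_inr (w a b : List J) :
    (Sum.inl w : FIM J) * (Sum.inr (a, b) : FIM J) = Sum.inr (w ++ a, b) := rfl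
@[simp] lemma FIM.inr_mul_inl (a b w : List J) :
    (Sum.inr (a, b) : FIM J) * (Sum.inl w : FIM J) = Sum.inr (a, b ++ w) := rfl
@[simp] lemma FIM.inr_mul_inr (a b c d : List J) :
    (Sum.inr (a, b) : FIM J) * (Sum.inr (c, d) : FIM J) = Sum.inr (a, b ++ c ++ d) := rfl
@[simp] lemma FIM.one_def : (1 : FIM J) = Sum.inl [] := rfl

def qE : FIM J := Sum.inr ([], [])

lemma FIM.q_mul_mul_q (m : FIM J) : qE J * m * qE J = qE J * m := by
  rcases m with w | ⟨a, b⟩ <;> simp [qE]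

/-! ### Words in the quotient -/

def qHat : RingQuot (FreeInvRel k J) := RingQuot.mkAlgHom k (FreeInvRel k J) (qTilde k J)

def wProd (w : List J) : RingQuot (FreeInvRel k J) :=
  (w.map fun j => RingQuot.mkAlgHom k (FreeInvRel k J) (xTilde k J j)).prod

lemma wProd_nil : wProd k J [] = 1 := rfl

lemma wProd_cons (j : J) (w : List J) :
    wProd k J (j :: w) = RingQuot.mkAlgHom k (FreeInvRel k J) (xTilde k J j) * wProd k J w := rfl

lemma wProd_append (w w' : List J) : wProd k J (w ++ w') = wProd k J w * wProd k J w' := by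
  simp [wProd]

lemma monoVal_inl (w : List J) : monoVal k J (Sum.inl w) = wProd k J w := rfl

lemma monoVal_inr (a b : List J) :
    monoVal k J (Sum.inr (a, b)) = wProd k J a * qHat k J * wProd k J b := rfl

lemma q_wProd_q (w : List J) :
    qHat k J * wProd k J w * qHat k J = qHat k J * wProd k J w := by
  have := RingQuot.mkAlgHom_rel k (FreeInvRel.inv ((w.map fun j => xTilde k J j).prod))
  simpa [qHat, wProd, map_mul, map_list_prod, Function.comp_def] using this

/-! ### The map to the monoid algebra -/

abbrev MA (k J : Type) [Field k] : Type := MonoidAlgebra k (FIM J)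

def genElt : Option J → FIM J
  | none => qE J
  | some j => Sum.inl [j]

def genMap : (Option J →₀ k) →ₗ[k] MA k J :=
  Finsupp.lsum k fun o => LinearMap.toSpanSingleton k _ (MonoidAlgebra.single (genElt J o) 1)

@[simp] lemma genMap_single (o : Option J) (c : k) :
    genMap k J (Finsupp.single o c) = MonoidAlgebra.single (genElt J o) c := by
  simp [genMap, LinearMap.toSpanSingleton_apply, MonoidAlgebra.smul_single']

lemma Qsandwich (x : MA k J) :
    MonoidAlgebra.single (qE J) (1:k) * x * MonoidAlgebra.single (qE J) 1
      = MonoidAlgebra.single (qE J) 1 * x := by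
  induction x using MonoidAlgebra.induction with
  | zero => simp
  | single_add m c f _ _ ih =>
      rw [mul_add, add_mul, ih]
      congr 1
      simp [MonoidAlgebra.single_mul_single, FIM.q_mul_mul_q]

def phi : RingQuot (FreeInvRel k J) →ₐ[k] MA k J :=
  RingQuot.liftAlgHom k ⟨TensorAlgebra.lift k (genMap k J), by
    intro a b h
    induction h with
    | idem =>
        simp only [map_mul, qTilde, TensorAlgebra.lift_ι_apply, genMap_single]
        rw [MonoidAlgebra.single_mul_single]
        simp [genElt, qE]
    | inv a =>
        simp only [map_mul, qTilde, TensorAlgebra.lift_ι_apply, genMap_single]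
        exact Qsandwich k J _⟩

@[simp] lemma phi_mk (a : TensorAlgebra k (Option J →₀ k)) :
    phi k J (RingQuot.mkAlgHom k (FreeInvRel k J) a) = TensorAlgebra.lift k (genMap k J) a :=
  RingQuot.liftAlgHom_mkAlgHom_apply _ _ _ _

lemma phi_x (j : J) :
    phi k J (RingQuot.mkAlgHom k (FreeInvRel k J) (xTilde k J j))
      = MonoidAlgebra.single (Sum.inl [j]) 1 := by
  rw [phi_mk, xTilde, TensorAlgebra.lift_ι_apply, genMap_single]; rfl

lemma phi_q :
    phi k J (qHat k J) = MonoidAlgebra.single (qE J) 1 := by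
  rw [qHat, phi_mk, qTilde, TensorAlgebra.lift_ι_apply, genMap_single]; rfl

lemma phi_wProd (w : List J) :
    phi k J (wProd k J w) = MonoidAlgebra.single (Sum.inl w) 1 := by
  induction w with
  | nil => rw [wProd_nil, map_one]; rfl
  | cons j w ih =>
      rw [wProd_cons, map_mul, phi_x, ih, MonoidAlgebra.single_mul_single, one_mul,
        FIM.inl_mul_inl, List.singleton_append]

lemma phi_monoVal (m : FIM J) : phi k J (monoVal k J m) = MonoidAlgebra.single m 1 := by
  rcases m with w | ⟨a, b⟩
  · rw [monoVal_inl, phi_wProd]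
  · rw [monoVal_inr, map_mul, map_mul, phi_wProd, phi_q, phi_wProd,
      MonoidAlgebra.single_mul_single, MonoidAlgebra.single_mul_single]
    simp [qE]

/-! ### The map from the monoid algebra -/

def monoHom : FIM J →* RingQuot (FreeInvRel k J) where
  toFun := monoVal k J
  map_one' := rfl
  map_mul' x y := by
    rcases x with w | ⟨a, b⟩ <;> rcases y with w' | ⟨c, d⟩
    · simp only [FIM.inl_mul_inl, monoVal_inl, wProd_append]
    · simp only [FIM.inl_mul_inr, monoVal_inl, monoVal_inr, wProd_append, mul_assoc]
    · simp only [FIM.inr_mul_inl, monoVal_inl, monoVal_inr, wProd_append, mul_assoc]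
    · rw [FIM.inr_mul_inr]
      simp only [monoVal_inr, wProd_append]
      have key := q_wProd_q k J (b ++ c)
      rw [wProd_append] at key
      rw [show wProd k J a * qHat k J * wProd k J b * (wProd k J c * qHat k J * wProd k J d)
            = wProd k J a * (qHat k J * (wProd k J b * wProd k J c) * qHat k J) * wProd k J d by
          simp only [mul_assoc]]
      rw [key]
      simp only [mul_assoc]

def psi : MA k J →ₐ[k] RingQuot (FreeInvRel k J) :=
  MonoidAlgebra.lift k _ (FIM J) (monoHom k J)

@[simp] lemma psi_single (m : FIM J) (c : k) :
    psi k J (MonoidAlgebra.single m c) = c • monoVal k J m := by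
  simp [psi, MonoidAlgebra.lift_single]; rfl

def fiEquiv : RingQuot (FreeInvRel k J) ≃ₐ[k] MA k J :=
  AlgEquiv.ofAlgHom (phi k J) (psi k J)
    (by
      apply MonoidAlgebra.algHom_ext
      intro m
      simp [phi_monoVal]
      exact Subsingleton.elim _ _)
    (by
      apply RingQuot.ringQuot_ext'
      apply TensorAlgebra.hom_ext
      apply Finsupp.lhom_ext
      intro o c
      have hsm : Finsupp.single o c = c • Finsupp.single o (1:k) := by
        rw [Finsupp.smul_single, smul_eq_mul, mul_one]
      simp only [LinearMap.comp_apply, AlgHom.toLinearMap_apply, AlgHom.comp_apply, hsm,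
        map_smul, AlgHom.id_apply]
      congr 1
      rcases o with _ | j
      · show psi k J (phi k J (qHat k J)) = qHat k J
        rw [phi_q, psi_single, one_smul]
        show monoVal k J (Sum.inr ([], [])) = qHat k J
        rw [monoVal_inr, wProd_nil, one_mul, mul_one]
      · show psi k J (phi k J (RingQuot.mkAlgHom k (FreeInvRel k J) (xTilde k J j)))
            = RingQuot.mkAlgHom k (FreeInvRel k J) (xTilde k J j)
        rw [phi_x, psi_single, one_smul]
        show monoVal k J (Sum.inl [j]) = _
        rw [monoVal_inl, wProd_cons, wProd_nil, mul_one])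

/-- The monomials `1̂`, `q̂`, `x̂_{j₁}···x̂_{jₘ}`, and
`x̂_{j₁}···x̂_{jₜ}·q̂·x̂_{j_{t+1}}···x̂_{jₘ}` form a `k`-basis of the free invariant
algebra `Â = T(V)/I`. -/
theorem free_invariant_algebra_basis :
    ∃ b : Module.Basis (List J ⊕ (List J × List J)) k (RingQuot (FreeInvRel k J)),
      ∀ i, b i = monoVal k J i := by
  refine ⟨Module.Basis.ofRepr ((fiEquiv k J).toLinearEquiv.trans (MonoidAlgebra.coeffLinearEquiv k)), fun i => ?_⟩
  have h := Module.Basis.repr_symm_single_one (Module.Basis.ofRepr ((fiEquiv k J).toLinearEquiv.trans (MonoidAlgebra.coeffLinearEquiv k))) i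
  rw [← h]
  show psi k J (MonoidAlgebra.single i 1) = monoVal k J i
  rw [psi_single, one_smul]
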